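/- arXiv:math/0701052 — 3 statements merged into one kernel-verified Lean document; each statement's English description precedes it below -/
import Mathlib

section
/- Let 𝒪 be the ring of integers of a nonarchimedean local field with residue field of order q, and let p be a prime not dividing q. Then 𝒪ˣ/(𝒪ˣ)^{p^n} is cyclic, and it has order p^n if and only if q ≡ 1 (mod p^n). -/
open IsLocalRing Polynomial

lemma aux_card_quot_pow (G : Type*) [CommGroup G] [Finite G] [IsCyclic G] (N : ℕ) (hN : N ≠ 0) :
    Nat.card (G ⧸ (powMonoidHom N : G →* G).range) = Nat.gcd N (Nat.card G) := by
  have : Fintype G := Fintype.ofFinite G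
  obtain ⟨g, hg⟩ := IsCyclic.exists_generator (α := G)
  have hrange : (powMonoidHom N : G →* G).range = Subgroup.zpowers (g ^ N) := by
    ext x
    constructor
    · rintro ⟨y, rfl⟩
      obtain ⟨k, rfl⟩ := hg y
      exact ⟨k, by simp [powMonoidHom_apply, ← zpow_natCast, ← zpow_mul, mul_comm]⟩
    · rintro ⟨k, rfl⟩
      exact ⟨g ^ k, by simp [powMonoidHom_apply, ← zpow_natCast, ← zpow_mul, mul_comm]⟩
  have hm : orderOf g = Nat.card G := by
    rw [orderOf_eq_card_of_forall_mem_zpowers hg, Nat.card_eq_fintype_card]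
  have hmpos : 0 < Nat.card G := Nat.card_pos
  have hcardsub : Nat.card (Subgroup.zpowers (g ^ N)) = Nat.card G / Nat.gcd (Nat.card G) N := by
    rw [Nat.card_zpowers, orderOf_pow, hm]
  have hlag := Subgroup.card_eq_card_quotient_mul_card_subgroup
    (powMonoidHom N : G →* G).range
  rw [hrange, hcardsub] at hlag
  have hgcddvd : Nat.gcd (Nat.card G) N ∣ Nat.card G := Nat.gcd_dvd_left _ _
  have hne : Nat.card G / Nat.gcd (Nat.card G) N ≠ 0 := by
    have := Nat.div_pos (Nat.le_of_dvd hmpos hgcddvd)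
      (Nat.gcd_pos_of_pos_right _ (Nat.pos_of_ne_zero hN))
    omega
  have key : Nat.card (G ⧸ Subgroup.zpowers (g ^ N))
      = Nat.card G / (Nat.card G / Nat.gcd (Nat.card G) N) := by
    conv_lhs => rw [← Nat.mul_div_cancel (Nat.card (G ⧸ Subgroup.zpowers (g ^ N)))
      (Nat.pos_of_ne_zero hne)]
    rw [← hlag]
  rw [hrange, key, Nat.div_div_self hgcddvd hmpos.ne', Nat.gcd_comm]

lemma aux_exists_pow_eq (𝒪 : Type*) [CommRing 𝒪] [IsLocalRing 𝒪]
    [HenselianRing 𝒪 (maximalIdeal 𝒪)]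
    (N : ℕ) (hN : N ≠ 0) (hNu : ((N : ℕ) : ResidueField 𝒪) ≠ 0)
    (u : 𝒪ˣ) (hu : residue 𝒪 u = 1) : ∃ v : 𝒪ˣ, v ^ N = u := by
  have h := HenselianRing.is_henselian (R := 𝒪) (I := maximalIdeal 𝒪)
    (X ^ N - C (u : 𝒪)) (monic_X_pow_sub_C _ hN) 1 ?_ ?_
  · obtain ⟨a, ha, -⟩ := h
    have haN : a ^ N = (u : 𝒪) := by
      have := ha
      simp only [IsRoot, eval_sub, eval_pow, eval_X, eval_C, sub_eq_zero] at this
      exact this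
    have hau : IsUnit a := by
      have : IsUnit (a ^ N) := haN ▸ u.isUnit
      exact (isUnit_pow_iff hN).mp this
    refine ⟨hau.unit, Units.ext ?_⟩
    simp [haN]
  · have : residue 𝒪 (eval 1 (X ^ N - C (u : 𝒪))) = 0 := by
      simp [hu]
    exact (Ideal.Quotient.eq_zero_iff_mem).mp this
  · have : (Ideal.Quotient.mk (maximalIdeal 𝒪)) (eval 1 (derivative (X ^ N - C (u : 𝒪))))
        = ((N : ℕ) : ResidueField 𝒪) := by
      simp [derivative_X_pow]; rfl
    rw [this]
    exact isUnit_iff_ne_zero.mpr hNu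

lemma aux_prime_ne_zero_in (K : Type*) [Field K] [Finite K] (q p : ℕ)
    (hq : Nat.card K = q) (hp : p.Prime) (hpq : ¬ p ∣ q) : ((p : K)) ≠ 0 := by
  intro h
  have : Fintype K := Fintype.ofFinite K
  have hdvd : ringChar K ∣ p := (ringChar.spec K p).mp h
  have hcp : (ringChar K).Prime := CharP.char_is_prime K (ringChar K)
  have hchar : ringChar K = p := (Nat.prime_dvd_prime_iff_eq hcp hp).mp hdvd
  obtain ⟨m, -, hcard⟩ := FiniteField.card K (ringChar K)
  apply hpq
  rw [← hq, Nat.card_eq_fintype_card, hcard, hchar]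
  exact dvd_pow_self p m.ne_zero

lemma aux_units_surjective (𝒪 : Type*) [CommRing 𝒪] [IsLocalRing 𝒪] :
    Function.Surjective (Units.map (residue 𝒪).toMonoidHom : 𝒪ˣ →* (ResidueField 𝒪)ˣ) := by
  intro y
  obtain ⟨a, ha⟩ := Ideal.Quotient.mk_surjective (y : ResidueField 𝒪)
  have hau : IsUnit a := by
    by_contra hna
    have : a ∈ maximalIdeal 𝒪 := hna
    have : residue 𝒪 a = 0 := (Ideal.Quotient.eq_zero_iff_mem).mpr this
    rw [show residue 𝒪 a = (y : ResidueField 𝒪) from ha] at this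
    exact y.ne_zero this
  exact ⟨hau.unit, Units.ext (by simpa using (show residue 𝒪 a = (y : ResidueField 𝒪) from ha))⟩

/-- Let `𝒪` be the ring of integers of a nonarchimedean local field (a complete discrete
valuation ring) with finite residue field of order `q`, and let `p` be a prime not dividing
`q`.  Then `𝒪ˣ/(𝒪ˣ)^(p^n)` is cyclic, and it has order `p ^ n` iff `q ≡ 1 (mod p ^ n)`. -/
theorem stmt4 (𝒪 : Type*) [CommRing 𝒪] [IsDomain 𝒪] [IsDiscreteValuationRing 𝒪]
    [IsAdicComplete (IsLocalRing.maximalIdeal 𝒪) 𝒪]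
    [Finite (IsLocalRing.ResidueField 𝒪)]
    (q : ℕ) (hq : Nat.card (IsLocalRing.ResidueField 𝒪) = q)
    (p : ℕ) (hp : p.Prime) (hpq : ¬ p ∣ q) (n : ℕ) (hn : 1 ≤ n) :
    IsCyclic (𝒪ˣ ⧸ (powMonoidHom (p ^ n) : 𝒪ˣ →* 𝒪ˣ).range) ∧
      (Nat.card (𝒪ˣ ⧸ (powMonoidHom (p ^ n) : 𝒪ˣ →* 𝒪ˣ).range) = p ^ n ↔
        q ≡ 1 [MOD p ^ n]) := by
  set k := ResidueField 𝒪
  set N := p ^ n with hNdef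
  have hN0 : N ≠ 0 := pow_ne_zero n hp.pos.ne'
  have hNk : ((N : ℕ) : k) ≠ 0 := by
    rw [hNdef, Nat.cast_pow]
    exact pow_ne_zero n (aux_prime_ne_zero_in k q p hq hp hpq)
  set res : 𝒪ˣ →* kˣ := Units.map (residue 𝒪).toMonoidHom
  have hres : Function.Surjective res := aux_units_surjective 𝒪
  set φ : 𝒪ˣ →* (kˣ ⧸ (powMonoidHom N : kˣ →* kˣ).range) :=
    (QuotientGroup.mk' (powMonoidHom N : kˣ →* kˣ).range).comp res
  have hφsurj : Function.Surjective φ :=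
    (QuotientGroup.mk'_surjective _).comp hres
  have hker : φ.ker = (powMonoidHom N : 𝒪ˣ →* 𝒪ˣ).range := by
    ext u
    constructor
    · intro hu
      have : res u ∈ (powMonoidHom N : kˣ →* kˣ).range := by
        rwa [MonoidHom.mem_ker, MonoidHom.comp_apply, QuotientGroup.mk'_apply,
          QuotientGroup.eq_one_iff] at hu
      obtain ⟨y, hy⟩ := this
      obtain ⟨w, hw⟩ := hres y
      have hres1 : res (u * (w ^ N)⁻¹) = 1 := by
        rw [map_mul, map_inv, map_pow, hw]
        rw [powMonoidHom_apply] at hy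
        rw [hy, mul_inv_cancel]
      have hresidue : residue 𝒪 ((u * (w ^ N)⁻¹ : 𝒪ˣ) : 𝒪) = 1 := by
        have := congrArg (Units.val) hres1
        simpa [res] using this
      obtain ⟨v, hv⟩ := aux_exists_pow_eq 𝒪 N hN0 hNk (u * (w ^ N)⁻¹) hresidue
      refine ⟨v * w, ?_⟩
      rw [powMonoidHom_apply, mul_pow, hv]
      group
    · rintro ⟨y, rfl⟩
      rw [MonoidHom.mem_ker, MonoidHom.comp_apply, QuotientGroup.mk'_apply,
        QuotientGroup.eq_one_iff]
      exact ⟨res y, by rw [powMonoidHom_apply, powMonoidHom_apply, map_pow]⟩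
  have e : (𝒪ˣ ⧸ (powMonoidHom N : 𝒪ˣ →* 𝒪ˣ).range) ≃*
      (kˣ ⧸ (powMonoidHom N : kˣ →* kˣ).range) :=
    (QuotientGroup.quotientMulEquivOfEq hker.symm).trans
      (QuotientGroup.quotientKerEquivOfSurjective φ hφsurj)
  have hcyc2 : IsCyclic (kˣ ⧸ (powMonoidHom N : kˣ →* kˣ).range) :=
    isCyclic_of_surjective (QuotientGroup.mk' _) (QuotientGroup.mk'_surjective _)
  have hcyc : IsCyclic (𝒪ˣ ⧸ (powMonoidHom N : 𝒪ˣ →* 𝒪ˣ).range) :=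
    isCyclic_of_surjective e.symm.toMonoidHom e.symm.surjective
  refine ⟨hcyc, ?_⟩
  have hcard : Nat.card (𝒪ˣ ⧸ (powMonoidHom N : 𝒪ˣ →* 𝒪ˣ).range) = Nat.gcd N (q - 1) := by
    rw [Nat.card_congr e.toEquiv, aux_card_quot_pow kˣ N hN0, Nat.card_units, hq]
  rw [hcard]
  have hq1 : 1 ≤ q := by rw [← hq]; exact Nat.card_pos
  constructor
  · intro h
    have hdvd : N ∣ q - 1 := h ▸ Nat.gcd_dvd_right N (q - 1)
    exact ((Nat.modEq_iff_dvd' hq1).mpr hdvd).symm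
  · intro h
    have hdvd : N ∣ q - 1 := (Nat.modEq_iff_dvd' hq1).mp h.symm
    exact Nat.gcd_eq_left hdvd
end

section
/- Let K be a field containing a primitive p^n-th root of unity and let f ∈ Kˣ have image of order p^n in Kˣ/(Kˣ)^{p^n}. Then the splitting field of X^{p^n} − f over K is a cyclic extension of K of degree p^n. -/
open Polynomial

lemma aux_irred {p n : ℕ} (hp : p.Prime) {K : Type*} [Field K] {ζ : K}
    (hζ : IsPrimitiveRoot ζ (p ^ n)) {a : K} (ha : a ≠ 0) (hpa : ∀ b : K, b ^ p ≠ a) :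
    Irreducible (X ^ (p ^ n) - C a) := by
  set q := p ^ n with hq
  have hq0 : 0 < q := Nat.pow_pos hp.pos
  set A := AlgebraicClosure K
  set φ := algebraMap K A with hφ
  obtain ⟨r, hr⟩ := IsAlgClosed.exists_pow_nat_eq (φ a) hq0
  have hφa : φ a ≠ 0 := by simpa using ha
  have hr0 : r ≠ 0 := by rintro rfl; simp [hq0.ne'] at hr; exact hφa hr.symm
  have hint : IsIntegral K r := Algebra.IsIntegral.isIntegral r
  set g := minpoly K r with hg
  have hgirr := minpoly.irreducible hint
  have hgmonic := minpoly.monic hint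
  set d := g.natDegree with hd
  have hd0 : 0 < d := natDegree_pos_iff_degree_pos.mpr (minpoly.degree_pos hint)
  have hζ' : IsPrimitiveRoot (φ ζ) q := hζ.map_of_injective φ.injective
  have : NeZero q := ⟨hq0.ne'⟩
  -- the subfield φ(K)
  set F : Subfield A := φ.fieldRange with hF
  -- roots of unity of order dividing q are in F
  have hrou : ∀ x : A, x ^ q = 1 → x ∈ F := by
    intro x hx
    obtain ⟨i, -, hi⟩ := hζ'.eq_pow_of_pow_eq_one hx
    exact ⟨ζ ^ i, by simpa using hi⟩
  -- roots of g in A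
  have hgsplits : Splits (g.map φ) := IsAlgClosed.splits _
  set M := (g.map φ).roots with hM
  have hdeg : (g.map φ).natDegree = d :=
    (natDegree_map_eq_of_injective φ.injective g).trans hd.symm
  have hcard : Multiset.card M = d := by
    show Multiset.card (g.map φ).roots = d
    rw [← hdeg]
    exact splits_iff_card_roots.mp hgsplits
  have hdvd1 : g ∣ X ^ q - C a := minpoly.dvd K r (by simp [hr, hφ])
  -- every root of g is a q-th root of φ a
  have hroot : ∀ ρ ∈ M, ρ ^ q = φ a := by
    intro ρ hρ
    have h1 : (g.map φ).IsRoot ρ := isRoot_of_mem_roots hρ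
    have h2 : aeval ρ g = 0 := by rwa [aeval_def, ← eval_map]
    have := aeval_eq_zero_of_dvd_aeval_eq_zero hdvd1 h2
    simpa [sub_eq_zero] using this
  have hMne : ∀ ρ ∈ M, ρ ≠ 0 := by
    intro ρ hρ h0
    exact hφa (by rw [← hroot ρ hρ, h0, zero_pow hq0.ne'])
  -- product of roots is in F
  have hMprod : M.prod ∈ F := by
    have := hgsplits.coeff_zero_eq_prod_roots_of_monic (hgmonic.map φ)
    rw [hdeg] at this
    have hMp : M.prod = (-1) ^ d * (g.map φ).coeff 0 := by
      rw [this, ← mul_assoc, ← pow_add, Even.neg_one_pow ⟨d, rfl⟩, one_mul]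
    rw [hMp, coeff_map]
    exact mul_mem (pow_mem (neg_mem F.one_mem) d) ⟨g.coeff 0, rfl⟩
  -- r ^ d ∈ F
  have hrd : r ^ d ∈ F := by
    have key : (M.map (fun ρ => r / ρ)).prod * M.prod = r ^ d := by
      have h1 : (M.map (fun ρ => r / ρ * ρ)).prod = r ^ d := by
        have h2 : M.map (fun ρ => r / ρ * ρ) = M.map (fun _ => r) := by
          apply Multiset.map_congr rfl
          intro ρ hρ
          exact div_mul_cancel₀ r (hMne ρ hρ)
        rw [h2, Multiset.map_const', Multiset.prod_replicate, hcard]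
      rw [Multiset.prod_map_mul] at h1
      rw [← h1]
      congr 1
      exact congrArg Multiset.prod (Multiset.map_id' M).symm
    rw [← key]
    refine mul_mem (multiset_prod_mem _ ?_) hMprod
    intro x hx
    obtain ⟨ρ, hρ, rfl⟩ := Multiset.mem_map.mp hx
    apply hrou
    rw [div_pow, hr, hroot ρ hρ, div_self hφa]
  -- Bezout: r ^ gcd(d,q) ∈ F
  have hrq : r ^ q ∈ F := by rw [hr]; exact ⟨a, rfl⟩
  set m := Nat.gcd d q with hm
  have hm0 : 0 < m := Nat.gcd_pos_of_pos_left q hd0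
  have hrm : r ^ m ∈ F := by
    have hb := Nat.gcd_eq_gcd_ab d q
    have hZ : (m : ℤ) = (d : ℤ) * Nat.gcdA d q + (q : ℤ) * Nat.gcdB d q := by
      rw [hm]; exact_mod_cast hb
    have key : (r : A) ^ (m : ℤ) = (r ^ (d : ℤ)) ^ Nat.gcdA d q * (r ^ (q : ℤ)) ^ Nat.gcdB d q := by
      rw [hZ, zpow_add₀ hr0, zpow_mul, zpow_mul]
    have h1 : r ^ (d : ℤ) ∈ F := by rw [zpow_natCast]; exact hrd
    have h2 : r ^ (q : ℤ) ∈ F := by rw [zpow_natCast]; exact hrq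
    rw [← zpow_natCast r m, key]
    exact mul_mem (zpow_mem h1 _) (zpow_mem h2 _)
  obtain ⟨c, hc⟩ := hrm
  -- minpoly divides X^m - C c, so d ≤ m; but m ∣ d, hence m = d and d ∣ q
  have hdle : d ≤ m := by
    have hdvd2 : g ∣ X ^ m - C c := minpoly.dvd K r (by simp [← hc, hφ])
    have hne : (X ^ m - C c : K[X]) ≠ 0 := X_pow_sub_C_ne_zero hm0 c
    have := natDegree_le_of_dvd hdvd2 hne
    rwa [natDegree_X_pow_sub_C] at this
  have hdq : d ∣ q := by
    have : m = d := le_antisymm (Nat.le_of_dvd hd0 (Nat.gcd_dvd_left d q)) hdle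
    rw [← this]; exact Nat.gcd_dvd_right d q
  -- d = p ^ e
  obtain ⟨e, hen, hde⟩ := (Nat.dvd_prime_pow hp).mp hdq
  have hen' : e = n := by
    by_contra hne
    have hlt : e < n := lt_of_le_of_ne hen hne
    obtain ⟨c', hc'⟩ := hrd
    apply hpa (c' ^ p ^ (n - e - 1))
    apply φ.injective
    rw [map_pow, map_pow, hc', hde, ← pow_mul, ← pow_mul, ← hr]
    congr 1
    rw [← pow_succ, ← pow_add, hq]
    congr 1
    omega
  -- conclude
  have hassoc : Associated g (X ^ q - C a) := by
    apply associated_of_dvd_of_natDegree_le hdvd1 (X_pow_sub_C_ne_zero hq0 a)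
    rw [natDegree_X_pow_sub_C, ← hd, hde, hen']
  exact hassoc.irreducible hgirr

/-- If `K` contains a primitive `p ^ n`-th root of unity and `f ∈ Kˣ` has image of order
`p ^ n` in `Kˣ/(Kˣ)^(p^n)`, then the splitting field of `X ^ p ^ n - f` over `K` is a cyclic
extension of degree `p ^ n`. -/
theorem stmt5 (p n : ℕ) (hp : p.Prime) (hn : 1 ≤ n)
    (K : Type*) [Field K] (ζ : K) (hζ : IsPrimitiveRoot ζ (p ^ n))
    (f : Kˣ)
    (hf : orderOf (QuotientGroup.mk f : Kˣ ⧸ (powMonoidHom (p ^ n) : Kˣ →* Kˣ).range)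
      = p ^ n) :
    IsGalois K ((X ^ (p ^ n) - C (f : K)).SplittingField) ∧
    IsCyclic ((X ^ (p ^ n) - C (f : K)).SplittingField ≃ₐ[K]
      (X ^ (p ^ n) - C (f : K)).SplittingField) ∧
    Module.finrank K ((X ^ (p ^ n) - C (f : K)).SplittingField) = p ^ n := by
  have hq0 : 0 < p ^ n := Nat.pow_pos hp.pos
  have : NeZero (p ^ n) := ⟨hq0.ne'⟩
  have hpa : ∀ b : K, b ^ p ≠ (f : K) := by
    intro b hb
    have hb0 : b ≠ 0 := by
      rintro rfl
      exact f.ne_zero (by simpa [hp.ne_zero] using hb.symm)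
    set u := Units.mk0 b hb0 with hu
    have hfu : f = u ^ p := by
      ext; rw [← hb]; simp [hu]
    have hpow : (QuotientGroup.mk f : Kˣ ⧸ (powMonoidHom (p ^ n) : Kˣ →* Kˣ).range)
        ^ (p ^ (n - 1)) = 1 := by
      rw [← QuotientGroup.mk_pow, QuotientGroup.eq_one_iff]
      refine ⟨u, ?_⟩
      rw [powMonoidHom_apply, hfu, ← pow_mul, ← pow_succ']
      congr 2
      omega
    have := orderOf_dvd_of_pow_eq_one hpow
    rw [hf] at this
    have hle := Nat.le_of_dvd (Nat.pow_pos hp.pos) this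
    have : p ^ (n - 1) < p ^ n := Nat.pow_lt_pow_right hp.one_lt (by omega)
    omega
  have H : Irreducible (X ^ (p ^ n) - C (f : K)) := aux_irred hp hζ f.ne_zero hpa
  have hζne : (primitiveRoots (p ^ n) K).Nonempty :=
    ⟨ζ, (mem_primitiveRoots hq0).mpr hζ⟩
  exact ⟨isGalois_of_isSplittingField_X_pow_sub_C hζne H _,
    isCyclic_of_isSplittingField_X_pow_sub_C hζne H _,
    finrank_of_isSplittingField_X_pow_sub_C hζne H _⟩
end

section
/- Let v be a discrete valuation on a field M, p a prime, n ≥ 1, and let U ≤ Mˣ be a subgroup with v(u) = 0 for all u ∈ U. If f ∈ Mˣ has v(f) = p^{m₁} with m₁ < n, then the index of U·(Mˣ)^{p^n} in the subgroup generated by U, f, and (Mˣ)^{p^n} is divisible by p^{n-m₁}. -/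
/-- Let `v` be a surjective discrete valuation on a field `M`, `U ≤ Mˣ` a subgroup with
`v u = 0` for all `u ∈ U`, and `f ∈ Mˣ` with `v f = p ^ m₁`, `m₁ < n`.  Then the index of
`U·(Mˣ)^(p^n)` in the subgroup generated by `U`, `f` and `(Mˣ)^(p^n)` is divisible by
`p ^ (n - m₁)`. -/
theorem stmt7 (M : Type*) [Field M] (v : Mˣ →* Multiplicative ℤ)
    (hv : Function.Surjective v) (p : ℕ) (hp : p.Prime) (m₁ n : ℕ) (h : m₁ < n)
    (U : Subgroup Mˣ) (hU : ∀ u ∈ U, v u = Multiplicative.ofAdd (0 : ℤ))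
    (f : Mˣ) (hf : v f = Multiplicative.ofAdd ((p : ℤ) ^ m₁)) :
    (p : ℕ) ^ (n - m₁) ∣
      Subgroup.relIndex (U ⊔ (powMonoidHom (p ^ n) : Mˣ →* Mˣ).range)
        (U ⊔ Subgroup.zpowers f ⊔ (powMonoidHom (p ^ n) : Mˣ →* Mˣ).range) := by
  have hpn : (p : ℕ) ^ n ≠ 0 := pow_ne_zero _ hp.pos.ne'
  -- the composed map to `Multiplicative (ZMod (p ^ n))`
  set ψ : Mˣ →* Multiplicative (ZMod (p ^ n)) :=
    (AddMonoidHom.toMultiplicative (Int.castAddHom (ZMod (p ^ n)))).comp v with hψ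
  set B : Subgroup Mˣ :=
    U ⊔ Subgroup.zpowers f ⊔ (powMonoidHom (p ^ n) : Mˣ →* Mˣ).range with hB
  have hAK : U ⊔ (powMonoidHom (p ^ n) : Mˣ →* Mˣ).range ≤ ψ.ker := by
    apply sup_le
    · intro u hu
      simp [hψ, MonoidHom.mem_ker, hU u hu]
    · rintro _ ⟨x, rfl⟩
      have : ψ (x ^ (p ^ n)) = (ψ x) ^ (p ^ n) := map_pow ψ x _
      simp only [powMonoidHom_apply, MonoidHom.mem_ker, this]
      rw [← ofAdd_toAdd (ψ x), ← ofAdd_nsmul]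
      simp [nsmul_eq_mul, ZMod.natCast_self]
  have hstep1 : ψ.ker.relIndex B ∣
      (U ⊔ (powMonoidHom (p ^ n) : Mˣ →* Mˣ).range).relIndex B :=
    Subgroup.relIndex_dvd_of_le_left B hAK
  rw [Subgroup.relIndex_ker] at hstep1
  have hfB : f ∈ B := by
    apply Subgroup.mem_sup_left
    exact Subgroup.mem_sup_right (Subgroup.mem_zpowers f)
  have hmem : ψ f ∈ B.map ψ := Subgroup.mem_map_of_mem ψ hfB
  have hdvd2 : orderOf (ψ f) ∣ Nat.card (B.map ψ) :=
    Subgroup.orderOf_dvd_natCard _ hmem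
  have hord : orderOf (ψ f) = p ^ (n - m₁) := by
    have : ψ f = Multiplicative.ofAdd (((p ^ m₁ : ℕ) : ZMod (p ^ n))) := by
      simp [hψ, hf]
    rw [this, orderOf_ofAdd_eq_addOrderOf, ZMod.addOrderOf_coe _ hpn,
      Nat.gcd_eq_right (pow_dvd_pow p h.le), Nat.pow_div h.le hp.pos]
  rw [hord] at hdvd2
  exact hdvd2.trans hstep1
end
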